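/- Let 𝒯 and 𝒯′ be two families of finite oriented trees such that for every T′ ∈ 𝒯′ there exists a vertex t′ of T′ for which the sub-digraph of T′ induced on the remaining |T′|−1 vertices is an oriented tree belonging to 𝒯. If G is a finite simple graph with G ⇒ T for every T ∈ 𝒯, then the box product G □ K_{|G|+1} satisfies (G □ K_{|G|+1}) ⇒ T′ for every T′ ∈ 𝒯′. -/

import Mathlib

/-- An orientation of a simple graph `G`: an asymmetric relation `D` whose
symmetrization is exactly the adjacency relation of `G`. -/
def IsOrientation {V : Type*} (G : SimpleGraph V) (D : V → V → Prop) : Prop :=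
  (∀ u v, ¬ (D u v ∧ D v u)) ∧ ∀ u v, G.Adj u v ↔ (D u v ∨ D v u)

/-- A digraph structure on a relation: no loops and no pairs of opposite arcs. -/
def IsDigraph {W : Type*} (E : W → W → Prop) : Prop :=
  ∀ u v, ¬ (E u v ∧ E v u)

/-- `G ⇒ E`: every orientation `D` of `G` contains an isometric copy of the digraph `E`:
an injective map `f` inducing an isomorphism onto its image, preserving orientations,
such that distances (in the underlying undirected graphs) are preserved. -/
def IsoRamseyArrow {V W : Type*} (G : SimpleGraph V) (E : W → W → Prop) : Prop :=
  ∀ D : V → V → Prop, IsOrientation G D →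
    ∃ f : W → V, Function.Injective f ∧
      (∀ u v, E u v ↔ D (f u) (f v)) ∧
      (∀ u v, (SimpleGraph.fromRel E).edist u v = G.edist (f u) (f v))

/-- An oriented tree: a digraph whose underlying undirected graph is a tree. -/
def IsOrientedTree {W : Type*} (E : W → W → Prop) : Prop :=
  IsDigraph E ∧ (SimpleGraph.fromRel E).IsTree

section Helpers
open SimpleGraph

lemma box_edist_le_length {α β : Type*} {G : SimpleGraph α} {H : SimpleGraph β}
    {p q : α × β} (w : (G.boxProd H).Walk p q) : G.edist p.1 q.1 ≤ w.length := by
  induction w with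
  | nil => simp [edist_self]
  | @cons p r q h w ih =>
    rcases boxProd_adj.mp h with ⟨hG, _⟩ | ⟨_, hEq⟩
    · calc G.edist p.1 q.1 ≤ G.edist p.1 r.1 + G.edist r.1 q.1 := SimpleGraph.edist_triangle
        _ ≤ 1 + w.length := by
            have h1 : G.edist p.1 r.1 = 1 := edist_eq_one_iff_adj.mpr hG
            rw [h1]; gcongr
        _ = ((w.length + 1 : ℕ) : ℕ∞) := by push_cast; ring
        _ = ((Walk.cons h w).length : ℕ∞) := by rw [Walk.length_cons]
    · rw [hEq]
      calc G.edist r.1 q.1 ≤ w.length := ih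
        _ ≤ ((Walk.cons h w).length : ℕ∞) := by
            rw [Walk.length_cons]; exact_mod_cast Nat.le_succ _

lemma box_edist_add_one_le_length {α β : Type*} {G : SimpleGraph α} {H : SimpleGraph β}
    {p q : α × β} (w : (G.boxProd H).Walk p q) (hpq : p.2 ≠ q.2) :
    G.edist p.1 q.1 + 1 ≤ w.length := by
  induction w with
  | nil => exact absurd rfl hpq
  | @cons p r q h w ih =>
    rw [Walk.length_cons]
    rcases boxProd_adj.mp h with ⟨hG, hcol⟩ | ⟨_, hEq⟩
    · have hr : r.2 ≠ q.2 := hcol ▸ hpq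
      have h1 : G.edist p.1 r.1 = 1 := edist_eq_one_iff_adj.mpr hG
      calc G.edist p.1 q.1 + 1
          ≤ (G.edist p.1 r.1 + G.edist r.1 q.1) + 1 := by
            gcongr; exact SimpleGraph.edist_triangle
        _ = 1 + (G.edist r.1 q.1 + 1) := by rw [h1]; ring
        _ ≤ 1 + (w.length : ℕ∞) := by gcongr; exact ih hr
        _ = ((w.length + 1 : ℕ) : ℕ∞) := by push_cast; ring
    · rw [hEq]
      by_cases hr : r.2 = q.2
      · have := box_edist_le_length w
        calc G.edist r.1 q.1 + 1 ≤ (w.length : ℕ∞) + 1 := by gcongr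
          _ = ((w.length + 1 : ℕ) : ℕ∞) := by push_cast; ring
      · calc G.edist r.1 q.1 + 1 ≤ (w.length : ℕ∞) := ih hr
          _ ≤ ((w.length + 1 : ℕ) : ℕ∞) := by exact_mod_cast Nat.le_succ _

lemma box_edist_same {α β : Type*} {G : SimpleGraph α} {H : SimpleGraph β}
    (x y : α) (b : β) : (G.boxProd H).edist (x, b) (y, b) = G.edist x y := by
  refine le_antisymm ?_ ?_
  · rcases eq_or_ne (G.edist x y) ⊤ with h | h
    · simp [h]
    · obtain ⟨p, hp⟩ := SimpleGraph.exists_walk_of_edist_ne_top h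
      calc (G.boxProd H).edist (x, b) (y, b) ≤ (p.boxProdLeft H b).length :=
            SimpleGraph.edist_le _
        _ = p.length := by unfold Walk.boxProdLeft; exact congrArg _ (Walk.length_map _ _)
        _ = G.edist x y := hp
  · rcases eq_or_ne ((G.boxProd H).edist (x, b) (y, b)) ⊤ with h | h
    · simp [h]
    · obtain ⟨w, hw⟩ := SimpleGraph.exists_walk_of_edist_ne_top h
      calc G.edist x y ≤ w.length := box_edist_le_length w
        _ = _ := hw

lemma box_edist_diff {α β : Type*} {G : SimpleGraph α} {H : SimpleGraph β}
    (x y : α) {b c : β} (hbc : H.Adj b c) :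
    (G.boxProd H).edist (x, b) (y, c) = G.edist x y + 1 := by
  refine le_antisymm ?_ ?_
  · rcases eq_or_ne (G.edist x y) ⊤ with h | h
    · simp [h]
    · obtain ⟨p, hp⟩ := SimpleGraph.exists_walk_of_edist_ne_top h
      have hadj : (G.boxProd H).Adj (y, b) (y, c) := boxProd_adj_right.mpr hbc
      calc (G.boxProd H).edist (x, b) (y, c)
          ≤ ((p.boxProdLeft H b).append (Walk.cons hadj Walk.nil)).length :=
            SimpleGraph.edist_le _
        _ = ((p.length + 1 : ℕ) : ℕ∞) := by
            rw [Walk.length_append, show (p.boxProdLeft H b).length = p.length from by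
              unfold Walk.boxProdLeft; exact Walk.length_map _ _]
            simp
        _ = G.edist x y + 1 := by rw [← hp]; push_cast; ring
  · rcases eq_or_ne ((G.boxProd H).edist (x, b) (y, c)) ⊤ with h | h
    · simp [h]
    · obtain ⟨w, hw⟩ := SimpleGraph.exists_walk_of_edist_ne_top h
      calc G.edist x y + 1 ≤ w.length := box_edist_add_one_le_length w hbc.ne
        _ = _ := hw

end Helpers

theorem stmt2 (ι ι' : Type) (W : ι → Type) (W' : ι' → Type)
    [∀ i, Fintype (W i)] [∀ j, Fintype (W' j)]
    (E : ∀ i, W i → W i → Prop) (E' : ∀ j, W' j → W' j → Prop)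
    (hT : ∀ i, IsOrientedTree (E i)) (hT' : ∀ j, IsOrientedTree (E' j))
    -- every tree in 𝒯′ has a vertex whose removal leaves a tree isomorphic to a member of 𝒯
    (hsub : ∀ j : ι', ∃ (t' : W' j) (i : ι) (g : W i ≃ {x : W' j // x ≠ t'}),
      ∀ u v, E i u v ↔ E' j (g u).1 (g v).1)
    (V : Type) [Fintype V] (G : SimpleGraph V)
    (hG : ∀ i, IsoRamseyArrow G (E i)) :
    ∀ j, IsoRamseyArrow
      (G.boxProd (⊤ : SimpleGraph (Fin (Fintype.card V + 1)))) (E' j) := by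
  classical
  intro j D hD
  obtain ⟨t', i, g, hg⟩ := hsub j
  obtain ⟨hE'dig, hT'tree⟩ := hT' j
  obtain ⟨hEdig, hTtree⟩ := hT i
  set T' := SimpleGraph.fromRel (E' j) with hT'def
  set T := SimpleGraph.fromRel (E i) with hTdef
  -- lifting adjacency from T to T'
  have hadj_lift : ∀ a b : W i, T.Adj a b → T'.Adj (g a).1 (g b).1 := by
    intro a b hab
    rw [hTdef, SimpleGraph.fromRel_adj] at hab
    rw [hT'def, SimpleGraph.fromRel_adj]
    refine ⟨fun hc => hab.1 (g.injective (Subtype.ext hc)), ?_⟩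
    rcases hab.2 with h | h
    · exact Or.inl ((hg a b).mp h)
    · exact Or.inr ((hg b a).mp h)
  let φ : T →g T' := ⟨fun a => (g a).1, fun h => hadj_lift _ _ h⟩
  have hadj_down : ∀ (x y : W' j) (hx : x ≠ t') (hy : y ≠ t'), T'.Adj x y →
      T.Adj (g.symm ⟨x, hx⟩) (g.symm ⟨y, hy⟩) := by
    intro x y hx hy hxy
    rw [hT'def, SimpleGraph.fromRel_adj] at hxy
    rw [hTdef, SimpleGraph.fromRel_adj]
    constructor
    · intro hc
      apply hxy.1
      have := congrArg (fun z => ((g z : {x : W' j // x ≠ t'}) : W' j)) hc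
      simpa using this
    · rcases hxy.2 with h | h
      · left; rw [hg]; simpa using h
      · right; rw [hg]; simpa using h
  -- mapped walks avoiding t'
  have hup : ∀ a b : W i, ∃ p : T'.Walk ((g a) : W' j) ((g b) : W' j),
      (∀ z ∈ p.support, z ≠ t') ∧ (p.length : ℕ∞) = T.edist a b := by
    intro a b
    obtain ⟨w, hw⟩ := (hTtree.isConnected a b).exists_walk_length_eq_edist
    refine ⟨w.map φ, ?_, ?_⟩
    · intro z hz
      rw [SimpleGraph.Walk.support_map] at hz
      obtain ⟨c, _, rfl⟩ := List.mem_map.mp hz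
      exact (g c).2
    · rw [SimpleGraph.Walk.length_map]; exact hw
  -- lower bound lift
  have hlift : ∀ (x y : W' j) (p : T'.Walk x y) (hx : x ≠ t') (hy : y ≠ t'),
      (∀ z ∈ p.support, z ≠ t') →
      T.edist (g.symm ⟨x, hx⟩) (g.symm ⟨y, hy⟩) ≤ p.length := by
    intro x y p
    induction p with
    | nil => intro hx hy _; simp [SimpleGraph.edist_self]
    | @cons x z y h q ih =>
      intro hx hy hsup
      have hz : z ≠ t' := hsup z (by simp)
      have h1 : T.edist (g.symm ⟨x, hx⟩) (g.symm ⟨z, hz⟩) = 1 :=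
        SimpleGraph.edist_eq_one_iff_adj.mpr (hadj_down x z hx hz h)
      have h2 := ih hz hy (fun u hu => hsup u (by simp [hu]))
      calc T.edist (g.symm ⟨x, hx⟩) (g.symm ⟨y, hy⟩)
          ≤ T.edist (g.symm ⟨x, hx⟩) (g.symm ⟨z, hz⟩)
            + T.edist (g.symm ⟨z, hz⟩) (g.symm ⟨y, hy⟩) := SimpleGraph.edist_triangle
        _ ≤ 1 + (q.length : ℕ∞) := by rw [h1]; gcongr
        _ = (((SimpleGraph.Walk.cons h q).length : ℕ) : ℕ∞) := by
            rw [SimpleGraph.Walk.length_cons]; push_cast; ring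
  -- unique neighbour of t'
  have hWi : Nonempty (W i) := hTtree.isConnected.nonempty
  have huniq : ∀ x y : W' j, T'.Adj t' x → T'.Adj t' y → x = y := by
    intro x y hx hy
    by_contra hxy
    have hxne : x ≠ t' := hx.ne'
    have hyne : y ≠ t' := hy.ne'
    obtain ⟨w, hsup, -⟩ := hup (g.symm ⟨y, hyne⟩) (g.symm ⟨x, hxne⟩)
    let w' : T'.Walk y x := w.copy (by simp) (by simp)
    have hsup' : ∀ z ∈ w'.support, z ≠ t' := by
      intro z hz; exact hsup z (by simpa [w', SimpleGraph.Walk.support_copy] using hz)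
    let q := w'.toPath
    have hq : t' ∉ q.1.support :=
      fun hmem => (hsup' t' (SimpleGraph.Walk.support_toPath_subset w' hmem)) rfl
    have hP2 : (SimpleGraph.Walk.cons hy q.1).IsPath := q.2.cons hq
    have hPP := SimpleGraph.isAcyclic_iff_path_unique.mp hT'tree.IsAcyclic
      (SimpleGraph.Path.singleton hx) ⟨SimpleGraph.Walk.cons hy q.1, hP2⟩
    have hlen : 1 = q.1.length + 1 := by
      simpa [SimpleGraph.Path.singleton] using congrArg (fun p : T'.Path t' x => p.1.length) hPP
    exact hxy (SimpleGraph.Walk.eq_of_length_eq_zero (p := q.1) (by omega)).symm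
  -- the neighbour s of t'
  obtain ⟨wts⟩ := hT'tree.isConnected.preconnected t' ((g (Classical.arbitrary (W i))) : W' j)
  obtain ⟨s, hst, -, -⟩ :=
    SimpleGraph.Walk.exists_eq_cons_of_ne (Ne.symm (g (Classical.arbitrary (W i))).2) wts
  have hs_ne : s ≠ t' := hst.ne'
  set s₀ := g.symm ⟨s, hs_ne⟩ with hs₀
  have hgs₀ : ((g s₀ : {x : W' j // x ≠ t'}) : W' j) = s := by rw [hs₀]; simp
  have hleaf : ∀ x, T'.Adj t' x → x = s := fun x hx => huniq x s hx hst
  -- distances in T' vs T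
  have hC : ∀ (x y : W' j) (hx : x ≠ t') (hy : y ≠ t'),
      T'.edist x y = T.edist (g.symm ⟨x, hx⟩) (g.symm ⟨y, hy⟩) := by
    intro x y hx hy
    refine le_antisymm ?_ ?_
    · obtain ⟨p, hsup, hlen⟩ := hup (g.symm ⟨x, hx⟩) (g.symm ⟨y, hy⟩)
      let p' : T'.Walk x y := p.copy (by simp) (by simp)
      calc T'.edist x y ≤ p'.length := SimpleGraph.edist_le _
        _ = T.edist (g.symm ⟨x, hx⟩) (g.symm ⟨y, hy⟩) := by
            rw [show p'.length = p.length from SimpleGraph.Walk.length_copy _ _ _]; exact hlen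
    · obtain ⟨w, hw⟩ := (hT'tree.isConnected.preconnected x y).exists_walk_length_eq_edist
      set q := w.toPath with hqdef
      have hnt : t' ∉ q.1.support := by
        intro hmem
        have hq1 := q.2.takeUntil hmem
        have hq2 := q.2.dropUntil hmem
        obtain ⟨z1, hz1, r1, hr1⟩ :=
          SimpleGraph.Walk.exists_eq_cons_of_ne (Ne.symm hx) (q.1.takeUntil t' hmem).reverse
        obtain ⟨z2, hz2, r2, hr2⟩ :=
          SimpleGraph.Walk.exists_eq_cons_of_ne (Ne.symm hy) (q.1.dropUntil t' hmem)
        have hz1s : z1 = s := huniq z1 s hz1 hst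
        have hz2s : z2 = s := huniq z2 s hz2 hst
        have hs1 : s ∈ (q.1.takeUntil t' hmem).support := by
          have h1 : z1 ∈ (q.1.takeUntil t' hmem).reverse.support := by
            rw [hr1]
            exact List.mem_cons_of_mem _ r1.start_mem_support
          rw [SimpleGraph.Walk.support_reverse, List.mem_reverse] at h1
          exact hz1s ▸ h1
        have hs2 : s ∈ (q.1.dropUntil t' hmem).support.tail := by
          rw [hr2, SimpleGraph.Walk.support_cons]
          exact hz2s ▸ r2.start_mem_support
        have hnodup : ((q.1.takeUntil t' hmem).support
            ++ (q.1.dropUntil t' hmem).support.tail).Nodup := by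
          have hnd := q.2.support_nodup
          rw [← SimpleGraph.Walk.take_spec q.1 hmem, SimpleGraph.Walk.support_append] at hnd
          exact hnd
        exact ((List.nodup_append'.mp hnodup).2.2 hs1) hs2
      have hle := hlift x y q.1 hx hy (fun z hz h => hnt (h ▸ hz))
      calc T.edist (g.symm ⟨x, hx⟩) (g.symm ⟨y, hy⟩) ≤ q.1.length := hle
        _ ≤ (w.length : ℕ∞) := by exact_mod_cast SimpleGraph.Walk.length_bypass_le w
        _ = T'.edist x y := hw
  have hdt : ∀ (x : W' j), x ≠ t' → T'.edist x t' = T'.edist x s + 1 := by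
    intro x hx
    refine le_antisymm ?_ ?_
    · calc T'.edist x t' ≤ T'.edist x s + T'.edist s t' := SimpleGraph.edist_triangle
        _ = T'.edist x s + 1 := by rw [SimpleGraph.edist_eq_one_iff_adj.mpr hst.symm]
    · obtain ⟨w, hw⟩ := (hT'tree.isConnected.preconnected x t').exists_walk_length_eq_edist
      obtain ⟨z, hz, r, hr⟩ := SimpleGraph.Walk.exists_eq_cons_of_ne (Ne.symm hx) w.reverse
      have hzs : z = s := huniq z s hz hst
      have hrs : T'.edist s x ≤ r.length := hzs ▸ SimpleGraph.edist_le r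
      have hlen : w.length = r.length + 1 := by
        have := congrArg SimpleGraph.Walk.length hr
        simpa [SimpleGraph.Walk.length_reverse, SimpleGraph.Walk.length_cons] using this
      calc T'.edist x s + 1 = T'.edist s x + 1 := by rw [SimpleGraph.edist_comm]
        _ ≤ (r.length : ℕ∞) + 1 := by gcongr
        _ = ((r.length + 1 : ℕ) : ℕ∞) := by push_cast; ring
        _ = (w.length : ℕ∞) := by rw [hlen]
        _ = T'.edist x t' := hw
  -- column orientations
  have hcol : ∀ k : Fin (Fintype.card V + 1),
      IsOrientation G (fun u v => D (u, k) (v, k)) := by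
    intro k
    refine ⟨fun u v h => hD.1 _ _ h, fun u v => ?_⟩
    rw [← hD.2 (u, k) (v, k)]
    exact SimpleGraph.boxProd_adj_left.symm
  choose f hinj hiff hdist using fun k => hG i _ (hcol k)
  have hcard : Fintype.card V < Fintype.card (Fin (Fintype.card V + 1)) := by simp
  obtain ⟨k, k', hkk', heq⟩ :=
    Fintype.exists_ne_map_eq_of_card_lt (fun k : Fin (Fintype.card V + 1) => f k s₀) hcard
  set a := f k s₀ with ha
  have hfk' : f k' s₀ = a := heq.symm
  have hadjkk' : (G.boxProd (⊤ : SimpleGraph (Fin (Fintype.card V + 1)))).Adj (a, k) (a, k') :=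
    SimpleGraph.boxProd_adj_right.mpr (by simpa using hkk')
  have hEst : E' j s t' ∨ E' j t' s := by
    have := (SimpleGraph.fromRel_adj _ _ _).mp hst
    tauto
  obtain ⟨b, c, hbc, hfb, hor⟩ :
      ∃ b c : Fin (Fintype.card V + 1), b ≠ c ∧ f b s₀ = a ∧
        ((E' j s t' ∧ D (a, b) (a, c)) ∨ (E' j t' s ∧ D (a, c) (a, b))) := by
    rcases (hD.2 _ _).mp hadjkk' with hDk | hDk
    · rcases hEst with he | he
      · exact ⟨k, k', hkk', rfl, Or.inl ⟨he, hDk⟩⟩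
      · exact ⟨k', k, hkk'.symm, hfk', Or.inr ⟨he, hDk⟩⟩
    · rcases hEst with he | he
      · exact ⟨k', k, hkk'.symm, hfk', Or.inl ⟨he, hDk⟩⟩
      · exact ⟨k, k', hkk', rfl, Or.inr ⟨he, hDk⟩⟩
  refine ⟨fun x => if h : x = t' then (a, c) else (f b (g.symm ⟨x, h⟩), b), ?_, ?_, ?_⟩
  · -- injectivity
    intro x y hxy
    dsimp only at hxy
    by_cases hx : x = t' <;> by_cases hy : y = t'
    · rw [hx, hy]
    · exfalso; rw [dif_pos hx, dif_neg hy] at hxy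
      exact hbc (congrArg Prod.snd hxy).symm
    · exfalso; rw [dif_neg hx, dif_pos hy] at hxy
      exact hbc (congrArg Prod.snd hxy)
    · rw [dif_neg hx, dif_neg hy] at hxy
      have h1 := hinj b (congrArg Prod.fst hxy)
      have h2 := congrArg (fun z => ((g z : {x : W' j // x ≠ t'}) : W' j)) h1
      simpa using h2
  · -- orientation
    intro x y
    dsimp only
    by_cases hx : x = t' <;> by_cases hy : y = t'
    · rw [hx, hy, dif_pos rfl]
      exact ⟨fun h => absurd ⟨h, h⟩ (hE'dig t' t'), fun h => absurd ⟨h, h⟩ (hD.1 _ _)⟩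
    · rw [hx, dif_pos rfl, dif_neg hy]
      constructor
      · intro h
        have hadj : T'.Adj t' y :=
          (SimpleGraph.fromRel_adj _ _ _).mpr ⟨Ne.symm hy, Or.inl h⟩
        have hsy : s = y := (hleaf y hadj).symm
        subst hsy
        have hgg : g.symm ⟨s, hy⟩ = s₀ := by rw [hs₀]
        rw [hgg, hfb]
        rcases hor with ⟨he, _⟩ | ⟨_, hd⟩
        · exact absurd ⟨he, h⟩ (hE'dig s t')
        · exact hd
      · intro h
        have hadj := (hD.2 _ _).mpr (Or.inl h)
        rcases SimpleGraph.boxProd_adj.mp hadj with ⟨_, h2⟩ | ⟨_, h2⟩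
        · exact absurd h2.symm hbc
        · have h3 : g.symm ⟨y, hy⟩ = s₀ := hinj b (h2.symm.trans hfb.symm)
          have hsy : s = y := by
            have := congrArg (fun z => ((g z : {x : W' j // x ≠ t'}) : W' j)) h3
            simpa [hgs₀] using this.symm
          subst hsy
          rcases hor with ⟨he, hd⟩ | ⟨he, _⟩
          · exfalso
            rw [h3, hfb] at h
            exact hD.1 _ _ ⟨hd, h⟩
          · exact he
    · rw [hy, dif_pos rfl, dif_neg hx]
      constructor
      · intro h
        have hadj : T'.Adj t' x :=
          (SimpleGraph.fromRel_adj _ _ _).mpr ⟨Ne.symm hx, Or.inr h⟩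
        have hsx : s = x := (hleaf x hadj).symm
        subst hsx
        have hgg : g.symm ⟨s, hx⟩ = s₀ := by rw [hs₀]
        rw [hgg, hfb]
        rcases hor with ⟨_, hd⟩ | ⟨he, _⟩
        · exact hd
        · exact absurd ⟨h, he⟩ (hE'dig s t')
      · intro h
        have hadj := (hD.2 _ _).mpr (Or.inl h)
        rcases SimpleGraph.boxProd_adj.mp hadj with ⟨_, h2⟩ | ⟨_, h2⟩
        · exact absurd h2 hbc
        · have h3 : g.symm ⟨x, hx⟩ = s₀ := hinj b (h2.trans hfb.symm)
          have hsx : s = x := by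
            have := congrArg (fun z => ((g z : {x : W' j // x ≠ t'}) : W' j)) h3
            simpa [hgs₀] using this.symm
          subst hsx
          rcases hor with ⟨he, _⟩ | ⟨he, hd⟩
          · exact he
          · exfalso
            rw [h3, hfb] at h
            exact hD.1 _ _ ⟨h, hd⟩
    · rw [dif_neg hx, dif_neg hy]
      have h1 := hg (g.symm ⟨x, hx⟩) (g.symm ⟨y, hy⟩)
      simp only [Equiv.apply_symm_apply] at h1
      exact h1.symm.trans (hiff b _ _)
  · -- distances
    intro x y
    dsimp only
    have htop : (⊤ : SimpleGraph (Fin (Fintype.card V + 1))).Adj b c := by simpa using hbc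
    by_cases hx : x = t' <;> by_cases hy : y = t'
    · rw [hx, hy, dif_pos rfl]
      simp [SimpleGraph.edist_self]
    · rw [hx, dif_pos rfl, dif_neg hy]
      calc T'.edist t' y = T'.edist y t' := SimpleGraph.edist_comm
        _ = T'.edist y s + 1 := hdt y hy
        _ = T.edist (g.symm ⟨y, hy⟩) s₀ + 1 := by rw [hC y s hy hs_ne, ← hs₀]
        _ = G.edist (f b (g.symm ⟨y, hy⟩)) a + 1 := by rw [hdist b, hfb]
        _ = (G.boxProd (⊤ : SimpleGraph (Fin (Fintype.card V + 1)))).edist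
              (f b (g.symm ⟨y, hy⟩), b) (a, c) := (box_edist_diff _ _ htop).symm
        _ = _ := SimpleGraph.edist_comm
    · rw [hy, dif_neg hx, dif_pos rfl]
      calc T'.edist x t' = T'.edist x s + 1 := hdt x hx
        _ = T.edist (g.symm ⟨x, hx⟩) s₀ + 1 := by rw [hC x s hx hs_ne, ← hs₀]
        _ = G.edist (f b (g.symm ⟨x, hx⟩)) a + 1 := by rw [hdist b, hfb]
        _ = _ := (box_edist_diff _ _ htop).symm
    · rw [dif_neg hx, dif_neg hy]
      calc T'.edist x y = T.edist (g.symm ⟨x, hx⟩) (g.symm ⟨y, hy⟩) := hC x y hx hy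
        _ = G.edist (f b (g.symm ⟨x, hx⟩)) (f b (g.symm ⟨y, hy⟩)) := hdist b _ _
        _ = _ := (box_edist_same _ _ _).symm
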